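/- Every infinite virtually cyclic group has finite outer automorphism group. -/

import Mathlib

open Subgroup

lemma aux_gen {A : Type*} [Group A] {w v : A} (hw : ¬IsOfFinOrder w)
    (h : Subgroup.zpowers v = Subgroup.zpowers w) : v = w ∨ v = w⁻¹ := by
  have hinj : Function.Injective fun n : ℤ => w ^ n :=
    injective_zpow_iff_not_isOfFinOrder.mpr hw
  obtain ⟨a, ha⟩ : v ∈ Subgroup.zpowers w := h ▸ Subgroup.mem_zpowers v
  obtain ⟨b, hb⟩ : w ∈ Subgroup.zpowers v := h ▸ Subgroup.mem_zpowers w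
  simp only at ha hb
  have : w ^ (a * b) = w ^ (1 : ℤ) := by
    rw [zpow_one, zpow_mul, ha, hb]
  have hab : a * b = 1 := hinj this
  rcases Int.mul_eq_one_iff_eq_one_or_neg_one.mp hab with ⟨h1, _⟩ | ⟨h1, _⟩
  · left; rw [← ha, h1, zpow_one]
  · right; rw [← ha, h1]; group

lemma aux_index {A : Type*} [Group A] (z : A) (hidx : (Subgroup.zpowers z).index ≠ 0)
    (k : ℕ) (hk : k ≠ 0) : (Subgroup.zpowers (z ^ k)).index ≠ 0 := by
  have hle : Subgroup.zpowers (z ^ k) ≤ Subgroup.zpowers z :=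
    Subgroup.zpowers_le.mpr (Subgroup.pow_mem _ (Subgroup.mem_zpowers z) k)
  rw [← Subgroup.relIndex_mul_index hle]
  apply mul_ne_zero _ hidx
  set K := Subgroup.zpowers z with hK
  have hrel : (Subgroup.zpowers (z ^ k)).relIndex K ≠ 0 := ?_
  · exact hrel
  set H := (Subgroup.zpowers (z ^ k)).subgroupOf K with hH
  have hkz : (k : ℤ) ≠ 0 := by exact_mod_cast hk
  have : Finite (K ⧸ H) := by
    set g : K := ⟨z, Subgroup.mem_zpowers z⟩ with hg
    apply Finite.of_surjective (fun i : Fin k => QuotientGroup.mk (g ^ (i : ℤ)) : Fin k → K ⧸ H)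
    intro q
    induction q using QuotientGroup.induction_on with
    | H x =>
      obtain ⟨n, hn⟩ : ∃ n : ℤ, z ^ n = (x : A) := x.2
      have hx : g ^ n = x := by ext; simpa using hn
      have h0 : 0 ≤ n % k := Int.emod_nonneg n hkz
      have h1 : n % k < k := Int.emod_lt_of_pos n (by positivity)
      refine ⟨⟨(n % k).toNat, by omega⟩, ?_⟩
      rw [← hx]
      apply (QuotientGroup.eq ..).mpr
      have hcoe : (((n % k).toNat : ℕ) : ℤ) = n % k := Int.toNat_of_nonneg h0
      have : (g ^ ((( ⟨(n % k).toNat, by omega⟩ : Fin k) : ℕ) : ℤ))⁻¹ * g ^ n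
          = (g ^ (k : ℤ)) ^ (n / k) := by
        rw [← zpow_mul, ← zpow_neg, ← zpow_add]
        congr 1
        rw [hcoe]
        rw [Int.emod_def]
        ring
      rw [this]
      rw [Subgroup.mem_subgroupOf]
      refine ⟨n / k, ?_⟩
      push_cast
      rw [← zpow_natCast z k, ← zpow_mul]
  exact Subgroup.index_ne_zero_of_finite

/-- A group is virtually cyclic if it has a cyclic subgroup of finite index. -/
def IsVirtuallyCyclic (G : Type*) [Group G] : Prop :=
  ∃ H : Subgroup G, IsCyclic H ∧ H.FiniteIndex

/-- Every infinite virtually cyclic group has finite outer automorphism group,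
i.e. the quotient of `Aut A` by the inner automorphisms is finite. -/
theorem out_of_virtually_cyclic_finite
    (A : Type*) [Group A] [Infinite A] (hA : IsVirtuallyCyclic A) :
    Finite (MulAut A ⧸ (MulAut.conj : A →* MulAut A).range) := by
  obtain ⟨C, hCcyc, hCfi⟩ := hA
  haveI := hCfi; haveI := hCcyc
  set N := C.normalCore with hNdef
  haveI : IsCyclic N := Subgroup.isCyclic_of_le C.normalCore_le
  haveI : N.FiniteIndex := C.finiteIndex_normalCore
  haveI : Infinite N := by
    by_contra h
    rw [not_infinite_iff_finite] at h
    haveI := h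
    haveI : Finite (A ⧸ N) := N.finite_quotient_of_finiteIndex
    haveI : Finite A :=
      Finite.of_equiv _ (Subgroup.groupEquivQuotientProdSubgroup (s := N)).symm
    exact not_finite A
  obtain ⟨g, hg⟩ := IsCyclic.exists_generator (α := N)
  set z := (g : A) with hzdef
  have hzN : Subgroup.zpowers z = N := by
    apply le_antisymm (Subgroup.zpowers_le.mpr g.2)
    intro x hx
    obtain ⟨j, hj⟩ := hg ⟨x, hx⟩
    exact ⟨j, by simpa using congrArg Subtype.val hj⟩
  have hz_inf : ¬IsOfFinOrder z := by
    intro h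
    have hfin : ((N : Subgroup A) : Set A).Finite := hzN ▸ h.finite_zpowers
    haveI : Finite N := hfin.to_subtype
    exact not_finite ↥N
  set m := N.index with hmdef
  have hm0 : m ≠ 0 := Subgroup.FiniteIndex.index_ne_zero
  set M := Subgroup.closure (Set.range fun a : A => a ^ m) with hMdef
  have hxmM : ∀ x : A, x ^ m ∈ M := fun x => Subgroup.subset_closure ⟨x, rfl⟩
  have hM_le : M ≤ N := by
    rw [hMdef, Subgroup.closure_le]
    rintro _ ⟨a, rfl⟩
    exact N.pow_index_mem a
  have hM_inv : ∀ f : MulAut A, ∀ x ∈ M, f x ∈ M := by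
    intro f
    have hle : M ≤ M.comap f.toMonoidHom := by
      rw [hMdef, Subgroup.closure_le]
      rintro _ ⟨a, rfl⟩
      simp only [SetLike.mem_coe, Subgroup.mem_comap, MulEquiv.coe_toMonoidHom, map_pow]
      exact hxmM (f a)
    exact fun x hx => hle hx
  haveI : IsCyclic M := Subgroup.isCyclic_of_le hM_le
  obtain ⟨w', hw'⟩ := IsCyclic.exists_generator (α := M)
  set w := (w' : A) with hwdef
  have hwM : Subgroup.zpowers w = M := by
    apply le_antisymm (Subgroup.zpowers_le.mpr w'.2)
    intro x hx
    obtain ⟨j, hj⟩ := hw' ⟨x, hx⟩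
    exact ⟨j, by simpa using congrArg Subtype.val hj⟩
  have hzm_inf : ¬IsOfFinOrder (z ^ m) := by
    intro h'
    obtain ⟨n, hn, he⟩ := isOfFinOrder_iff_pow_eq_one.mp h'
    exact hz_inf (isOfFinOrder_iff_pow_eq_one.mpr
      ⟨m * n, by positivity, by rw [pow_mul]; exact he⟩)
  have hw_inf : ¬IsOfFinOrder w := by
    intro h
    apply hzm_inf
    apply finite_zpowers.mp
    apply Set.Finite.subset (hwM ▸ h.finite_zpowers)
    exact SetLike.coe_subset_coe.mpr (Subgroup.zpowers_le.mpr (hwM ▸ hxmM z))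
  have hMidx : M.index ≠ 0 := by
    have h1 : (Subgroup.zpowers z).index ≠ 0 := by rw [hzN]; exact hm0
    have h2 := aux_index z h1 m hm0
    have hdvd : M.index ∣ (Subgroup.zpowers (z ^ m)).index :=
      Subgroup.index_dvd_of_le (Subgroup.zpowers_le.mpr (hxmM z))
    intro h
    exact h2 (Nat.eq_zero_of_zero_dvd (h ▸ hdvd))
  set F := Subgroup.zpowers (w ^ (6 : ℕ)) with hFdef
  have hwF : w ^ (6 : ℕ) ∈ M := hwM ▸ Subgroup.pow_mem _ (Subgroup.mem_zpowers w) 6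
  have hF_le : F ≤ M := Subgroup.zpowers_le.mpr hwF
  have hFidx : F.index ≠ 0 := aux_index w (by rw [hwM]; exact hMidx) 6 (by norm_num)
  haveI : F.FiniteIndex := ⟨hFidx⟩
  have hgen : ∀ f : MulAut A, f w = w ∨ f w = w⁻¹ := by
    intro f
    apply aux_gen hw_inf
    have hfwM : Subgroup.zpowers (f w) = M := by
      apply le_antisymm
        (Subgroup.zpowers_le.mpr (hM_inv f w (hwM ▸ Subgroup.mem_zpowers w)))
      intro x hx
      have hx' : f⁻¹ x ∈ M := hM_inv f⁻¹ x hx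
      rw [← hwM] at hx'
      obtain ⟨j, hj⟩ := hx'
      refine ⟨j, ?_⟩
      simp only at hj ⊢
      rw [← map_zpow, hj]
      simp
    rw [hfwM, hwM]
  have hF_map : ∀ f : MulAut A, F.map (f : A →* A) = F := by
    intro f
    rw [hFdef]
    rw [MonoidHom.map_zpowers]
    rcases hgen f with h | h
    · simp [map_pow, h]
    · simp [map_pow, h, inv_pow, Subgroup.zpowers_inv]
  haveI hFn : F.Normal := by
    constructor
    intro n hn a
    have hmap := hF_map (MulAut.conj a)
    rw [← hmap]
    exact ⟨n, hn, by simp [MulAut.conj_apply]⟩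
  let Ψ : MulAut A →* MulAut (A ⧸ F) :=
    { toFun := fun f => QuotientGroup.congr F F f (hF_map f)
      map_one' := by
        ext q
        induction q using QuotientGroup.induction_on with
        | H x => simp [QuotientGroup.congr_mk]
      map_mul' := by
        intro f g
        ext q
        induction q using QuotientGroup.induction_on with
        | H x => simp [QuotientGroup.congr_mk] }
  have hΨmk : ∀ (f : MulAut A) (x : A),
      Ψ f (QuotientGroup.mk x) = QuotientGroup.mk (f x) := by
    intro f x
    exact QuotientGroup.congr_mk F F f (hF_map f) x
  -- kernel of Ψ consists of inner automorphisms
  have hker : Ψ.ker ≤ (MulAut.conj : A →* MulAut A).range := by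
    intro φ hφ
    have hφ1 : Ψ φ = 1 := hφ
    have hq : ∀ x : A, φ x * x⁻¹ ∈ F := by
      intro x
      have h1 : (QuotientGroup.mk (φ x) : A ⧸ F) = QuotientGroup.mk x := by
        rw [← hΨmk φ x, hφ1]; rfl
      have h2 : (φ x)⁻¹ * x ∈ F := (QuotientGroup.eq ..).mp h1
      have h3 : x⁻¹ * φ x ∈ F := by
        have := F.inv_mem h2
        simpa using this
      have h4 := hFn.conj_mem _ h3 x
      have h5 : x * (x⁻¹ * φ x) * x⁻¹ = φ x * x⁻¹ := by group
      rwa [h5] at h4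
    have hφw : φ w = w := by
      rcases hgen φ with h | h
      · exact h
      · exfalso
        have hm2 := hq w
        rw [h] at hm2
        obtain ⟨t, ht⟩ := hm2
        simp only at ht
        have h6 : ((w ^ (6 : ℕ) : A)) ^ t = w ^ ((6 : ℤ) * t) := by
          rw [← zpow_natCast w 6, ← zpow_mul]; norm_num
        have hr : w⁻¹ * w⁻¹ = w ^ (-2 : ℤ) := by group
        have : w ^ ((6 : ℤ) * t) = w ^ (-2 : ℤ) := by rw [← h6, ht, hr]
        have := injective_zpow_iff_not_isOfFinOrder.mpr hw_inf this
        omega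
    have hφM : ∀ j : ℤ, φ (w ^ j) = w ^ j := fun j => by rw [map_zpow, hφw]
    have hcomm : ∀ x : A, Commute x w → φ x = x := by
      intro x hx
      obtain ⟨i, hi⟩ : φ x * x⁻¹ ∈ Subgroup.zpowers w := hwM ▸ hF_le (hq x)
      simp only at hi
      have hφx : φ x = w ^ i * x := by rw [hi]; group
      obtain ⟨j, hj⟩ : x ^ m ∈ Subgroup.zpowers w := hwM ▸ hxmM x
      simp only at hj
      have h1 : φ (x ^ m) = x ^ m := by rw [← hj, hφM, hj]
      have hcx : Commute (w ^ i) x := (hx.zpow_right i).symm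
      have h2 : φ (x ^ m) = (w ^ i) ^ m * x ^ m := by
        rw [map_pow, hφx, hcx.mul_pow]
      rw [h1] at h2
      have h3 : (w ^ i) ^ m = 1 := by
        have := h2.symm
        rwa [mul_eq_right] at this
      have h4 : w ^ (i * (m : ℤ)) = w ^ (0 : ℤ) := by
        rw [zpow_zero, ← h3, zpow_mul, zpow_natCast]
      have h5 : i * (m : ℤ) = 0 := injective_zpow_iff_not_isOfFinOrder.mpr hw_inf h4
      have hmz : (m : ℤ) ≠ 0 := by exact_mod_cast hm0
      have hi0 : i = 0 := by
        rcases mul_eq_zero.mp h5 with h | h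
        · exact h
        · exact absurd h hmz
      rw [hφx, hi0]; simp
    have hdi : ∀ x : A, x * w * x⁻¹ = w ∨ x * w * x⁻¹ = w⁻¹ := by
      intro x
      simpa [MulAut.conj_apply] using hgen (MulAut.conj x)
    by_cases hB : ∃ a : A, a * w * a⁻¹ = w⁻¹
    · obtain ⟨a, ha⟩ := hB
      obtain ⟨j, hj⟩ : φ a * a⁻¹ ∈ Subgroup.zpowers (w ^ (6 : ℕ)) := hq a
      simp only at hj
      have hj6 : ((w ^ (6 : ℕ) : A)) ^ j = w ^ ((6 : ℤ) * j) := by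
        rw [← zpow_natCast w 6, ← zpow_mul]; norm_num
      have hφa : φ a = w ^ ((6 : ℤ) * j) * a := by rw [← hj6, hj]; group
      have haw : ∀ t : ℤ, a * w ^ t * a⁻¹ = w ^ (-t) := by
        intro t
        have h1 : (MulAut.conj a) (w ^ t) = ((MulAut.conj a) w) ^ t := map_zpow _ _ _
        rw [MulAut.conj_apply, MulAut.conj_apply, ha] at h1
        rw [h1, inv_zpow, zpow_neg]
      refine ⟨w ^ ((3 : ℤ) * j), ?_⟩
      ext x
      rw [MulAut.conj_apply]
      rcases hdi x with hx | hx
      · have hcxw : Commute x w := by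
          have : x * w = w * x := by
            have := hx
            rw [mul_inv_eq_iff_eq_mul] at this
            exact this
          exact this
        rw [hcomm x hcxw]
        have hc : Commute (w ^ ((3 : ℤ) * j)) x := (hcxw.zpow_right _).symm
        rw [mul_inv_eq_iff_eq_mul, hc.eq]
      · -- x inverts w
        have hxw : x * w⁻¹ * x⁻¹ = w := by
          have h1 : x * w⁻¹ * x⁻¹ = (x * w * x⁻¹)⁻¹ := by group
          rw [h1, hx, inv_inv]
        have hhw : Commute (x * a⁻¹) w := by
          have haw1 : a⁻¹ * w * a = w⁻¹ := by
            have h1 := haw (-1)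
            simp only [zpow_neg, zpow_one, neg_neg] at h1
            -- h1 : a * w⁻¹ * a⁻¹ = w
            conv_lhs => rw [← h1]
            group
          have key : (x * a⁻¹) * w * (x * a⁻¹)⁻¹ = w := by
            have : (x * a⁻¹) * w * (x * a⁻¹)⁻¹ = x * (a⁻¹ * w * a) * x⁻¹ := by group
            rw [this, haw1, hxw]
          have : (x * a⁻¹) * w = w * (x * a⁻¹) := by
            rw [mul_inv_eq_iff_eq_mul] at key
            exact key
          exact this
        have hφh : φ (x * a⁻¹) = x * a⁻¹ := hcomm _ hhw
        have hx' : x = (x * a⁻¹) * a := by group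
        have hφx : φ x = (x * a⁻¹) * (w ^ ((6 : ℤ) * j) * a) := by
          rw [hx', map_mul, hφh, hφa]; group
        rw [hφx]
        set h := x * a⁻¹ with hhdef
        set w3 := w ^ ((3 : ℤ) * j) with hw3
        have hc : Commute w3 h := (hhw.zpow_right _).symm
        have e1 : a * w3⁻¹ = w3 * a := by
          have := haw (-(3 * j))
          rw [neg_neg] at this
          rw [← hw3] at this
          -- this : a * (w ^ (-(3*j))) * a⁻¹ = w3
          have h2 : a * w3⁻¹ * a⁻¹ = w3 := by
            rw [hw3, ← zpow_neg]
            exact this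
          conv_rhs => rw [← h2]
          group
        have e2 : w3 * w3 = w ^ ((6 : ℤ) * j) := by
          rw [hw3, ← zpow_add]; congr 1; ring
        rw [hx']
        calc w3 * (h * a) * w3⁻¹ = (w3 * h) * (a * w3⁻¹) := by group
          _ = (h * w3) * (w3 * a) := by rw [hc.eq, e1]
          _ = h * (w ^ ((6 : ℤ) * j) * a) := by rw [← e2]; group
    · push_neg at hB
      refine ⟨1, ?_⟩
      ext x
      have hx : Commute x w := by
        rcases hdi x with hx | hx
        · rw [mul_inv_eq_iff_eq_mul] at hx
          exact hx
        · exact absurd hx (hB x)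
      simp [MulAut.conj_apply, hcomm x hx]
  -- final assembly
  haveI : Finite (MulAut (A ⧸ F)) :=
    Finite.of_injective (fun f : MulAut (A ⧸ F) => (f : (A ⧸ F) → (A ⧸ F)))
      DFunLike.coe_injective
  haveI : Finite (MulAut A ⧸ Ψ.ker) :=
    Finite.of_equiv _ (QuotientGroup.quotientKerEquivRange Ψ).toEquiv.symm
  let π : (MulAut A ⧸ Ψ.ker) → (MulAut A ⧸ (MulAut.conj : A →* MulAut A).range) :=
    Quotient.map' id (by
      intro a b h
      rw [QuotientGroup.leftRel_apply] at h ⊢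
      exact hker h)
  apply Finite.of_surjective π
  intro q
  induction q using Quotient.inductionOn' with
  | h a => exact ⟨Quotient.mk'' a, rfl⟩
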